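/- Under the assumptions below, the function t ↦ Complex.arg(1 − e^{πi/N}·(−f(t))^{1/N}) · t^{−1} is integrable on (0, λₙ) and ∫₀^{λₙ} Complex.arg(1 − e^{πi/N}(−f(t))^{1/N}) dt/t = − Σ_{k=1}^∞ (1/k) · sin(πk/N) · ∫₀^{λₙ} (−f(t))^{k/N} dt/t, the series on the right converging absolutely. -/

import Mathlib

open scoped BigOperators
open MeasureTheory Real Set

lemma argSeries (θ x : ℝ) (hx0 : 0 ≤ x) (hx1 : x < 1) :
    HasSum (fun k : ℕ => -(Real.sin (((k:ℝ)+1)*θ) * x^(k+1) / ((k:ℝ)+1)))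
      (Complex.arg (1 - Complex.exp ((θ:ℂ)*Complex.I) * (x:ℂ))) := by
  set z : ℂ := Complex.exp ((θ:ℂ)*Complex.I) * (x:ℂ) with hzdef
  have hz : ‖z‖ < 1 := by
    simp only [hzdef, norm_mul, Complex.norm_exp, Complex.norm_real]
    simp [abs_of_nonneg hx0, hx1]
  have h1 := (Complex.hasSum_taylorSeries_neg_log hz).mapL Complex.imCLM
  have hterm : ∀ m : ℕ, Complex.imCLM (z ^ m / (m:ℂ)) = Real.sin ((m:ℝ)*θ) * x^m / m := by
    intro m
    have hzm : z ^ m = Complex.exp ((((m:ℝ)*θ : ℝ):ℂ)*Complex.I) * ((x^m : ℝ):ℂ) := by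
      rw [hzdef, mul_pow, ← Complex.exp_nat_mul]
      push_cast
      ring_nf
    have hmc : (m:ℂ) = ((m:ℝ):ℂ) := by push_cast; ring
    rw [hzm, hmc]
    simp only [Complex.imCLM_apply, Complex.div_im, Complex.mul_im, Complex.mul_re,
      Complex.exp_ofReal_mul_I_re, Complex.exp_ofReal_mul_I_im, Complex.ofReal_im,
      Complex.ofReal_re, Complex.normSq_ofReal]
    rcases Nat.eq_zero_or_pos m with rfl | hm
    · simp
    · have hm' : (m:ℝ) ≠ 0 := Nat.cast_ne_zero.mpr hm.ne'
      field_simp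
      ring
  have him : Complex.imCLM (-Complex.log (1 - z)) = -Complex.arg (1 - z) := by
    simp [Complex.log_im]
  rw [him] at h1
  simp only [hterm] at h1
  have h2 := h1.neg
  simp only [neg_neg] at h2
  have h3 := (hasSum_nat_add_iff' (f := fun m : ℕ => -(Real.sin ((m:ℝ)*θ) * x^m / m)) 1).mpr h2
  simp only [Finset.range_one, Finset.sum_singleton, Nat.cast_zero, zero_mul, Real.sin_zero,
    pow_zero] at h3
  convert h3 using 2 with k
  · rfl
  · push_cast
    ring_nf
  · simp

lemma argTermBound (θ x y : ℝ) (hx0 : 0 ≤ x) (hxy : x ≤ y) (k : ℕ) :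
    |(-(Real.sin (((k:ℝ)+1)*θ) * x^(k+1) / ((k:ℝ)+1)))| ≤ x * y ^ k := by
  have hk1 : (1:ℝ) ≤ (k:ℝ)+1 := by
    have : (0:ℝ) ≤ (k:ℝ) := Nat.cast_nonneg k
    linarith
  rw [abs_neg, abs_div, abs_mul, abs_of_nonneg (pow_nonneg hx0 _),
    abs_of_pos (by linarith : (0:ℝ) < (k:ℝ)+1)]
  calc |Real.sin (((k:ℝ)+1)*θ)| * x^(k+1) / ((k:ℝ)+1)
      ≤ 1 * x^(k+1) / 1 := by
        gcongr
        try exact Real.abs_sin_le_one _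
    _ = x * x ^ k := by rw [one_mul, div_one, pow_succ']
    _ ≤ x * y ^ k := by gcongr

lemma argBound (θ x y : ℝ) (hx0 : 0 ≤ x) (hxy : x ≤ y) (hy : y < 1) :
    |Complex.arg (1 - Complex.exp ((θ:ℂ)*Complex.I) * (x:ℂ))| ≤ x / (1 - y) := by
  have hx1 : x < 1 := lt_of_le_of_lt hxy hy
  have hy0 : 0 ≤ y := le_trans hx0 hxy
  have hs := argSeries θ x hx0 hx1
  have hgeo : HasSum (fun k : ℕ => x * y ^ k) (x * (1-y)⁻¹) :=
    (hasSum_geometric_of_lt_one hy0 hy).mul_left x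
  have hsummand : ∀ k : ℕ, ‖(-(Real.sin (((k:ℝ)+1)*θ) * x^(k+1) / ((k:ℝ)+1)))‖ ≤ x * y ^ k :=
    fun k => argTermBound θ x y hx0 hxy k
  have hsumnorm : Summable (fun k : ℕ =>
      ‖(-(Real.sin (((k:ℝ)+1)*θ) * x^(k+1) / ((k:ℝ)+1)))‖) :=
    Summable.of_nonneg_of_le (fun k => norm_nonneg _) hsummand hgeo.summable
  rw [← hs.tsum_eq]
  calc |∑' k : ℕ, -(Real.sin (((k:ℝ)+1)*θ) * x^(k+1) / ((k:ℝ)+1))|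
      ≤ ∑' k : ℕ, ‖(-(Real.sin (((k:ℝ)+1)*θ) * x^(k+1) / ((k:ℝ)+1)))‖ :=
        norm_tsum_le_tsum_norm hsumnorm
    _ ≤ ∑' k : ℕ, x * y ^ k := Summable.tsum_le_tsum hsummand hsumnorm hgeo.summable
    _ = x * (1-y)⁻¹ := hgeo.tsum_eq
    _ = x / (1-y) := (div_eq_mul_inv _ _).symm

set_option maxHeartbeats 1000000 in
/-- Term-by-term logarithm expansion computing `Im(I₁ − I₂)` in the proof of
Theorem 4.2: `t ↦ arg(1 − e^{πi/N}·(−f(t))^{1/N})/t` is integrable on `(0, λₙ)` and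
`∫₀^{λₙ} arg(1 − e^{πi/N}(−f(t))^{1/N}) dt/t
  = −Σ_{k≥1} (1/k)·sin(πk/N)·∫₀^{λₙ} (−f(t))^{k/N} dt/t`,
the series converging absolutely. -/
theorem stmt8 (N n : ℕ) (hN : 2 ≤ N) (hn : 1 ≤ n)
    (lam : Fin n → ℂ) (hne : ∀ i, lam i ≠ 0) (hinj : Function.Injective lam)
    (f : ℝ → ℝ) (hf : ∀ t : ℝ, (f t : ℂ) = (t : ℂ) * ∏ i, ((t : ℂ) - lam i))
    (ln : ℝ) (hlam : lam ⟨n - 1, by omega⟩ = (ln : ℂ)) (hln0 : 0 < ln) (hln1 : ln < 1)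
    (hother : ∀ i : Fin n, i ≠ ⟨n - 1, by omega⟩ →
      ∀ r : ℝ, lam i = (r : ℂ) → ¬(0 < r ∧ r < 1))
    (hbound : ∀ t : ℝ, 0 ≤ t → t < 1 → |f t| < 1) (hf1 : 0 < f 1)
    (c : ℝ) (hc0 : 0 < c) (hc : (c : ℂ) = (-1 : ℂ) ^ (n - 1) * ∏ i, lam i) :
    IntegrableOn (fun t : ℝ =>
      Complex.arg (1 - Complex.exp (Real.pi * Complex.I / (N : ℂ)) *
        (((-f t) ^ ((1 : ℝ) / (N : ℝ)) : ℝ) : ℂ)) / t) (Set.Ioo 0 ln) ∧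
    Summable (fun k : ℕ =>
      |(1 / ((k : ℝ) + 1)) * Real.sin (Real.pi * ((k : ℝ) + 1) / (N : ℝ)) *
        ∫ t in Set.Ioo 0 ln, (-f t) ^ (((k : ℝ) + 1) / (N : ℝ)) / t|) ∧
    (∫ t in Set.Ioo 0 ln,
        Complex.arg (1 - Complex.exp (Real.pi * Complex.I / (N : ℂ)) *
          (((-f t) ^ ((1 : ℝ) / (N : ℝ)) : ℝ) : ℂ)) / t) =
      -∑' k : ℕ,
        (1 / ((k : ℝ) + 1)) * Real.sin (Real.pi * ((k : ℝ) + 1) / (N : ℝ)) *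
          ∫ t in Set.Ioo 0 ln, (-f t) ^ (((k : ℝ) + 1) / (N : ℝ)) / t := by
  -- basic positivity facts
  have hNpos : (0:ℝ) < (N:ℝ) := by
    have : 0 < N := by omega
    exact_mod_cast this
  set θ : ℝ := Real.pi / N with hθdef
  have hEθ : Complex.exp ((Real.pi : ℂ) * Complex.I / (N : ℂ)) =
      Complex.exp ((θ:ℂ) * Complex.I) := by
    congr 1
    have hθc : ((θ:ℝ):ℂ) = (Real.pi:ℂ) / (N:ℂ) := by rw [hθdef]; push_cast; ring
    rw [hθc]
    have hNc : (N:ℂ) ≠ 0 := by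
      simp only [ne_eq, Nat.cast_eq_zero]
      omega
    field_simp
  -- the polynomial part P
  set P : ℝ → ℝ := fun t => (∏ i, ((t:ℂ) - lam i)).re with hPdef
  have hfP : ∀ t : ℝ, f t = t * P t := by
    intro t
    have h := congrArg Complex.re (hf t)
    simpa [hPdef, Complex.ofReal_re] using h
  have contQ : Continuous fun t : ℝ => ∏ i, ((t:ℂ) - lam i) :=
    continuous_finset_prod _ fun i _ => Complex.continuous_ofReal.sub continuous_const
  have contP : Continuous P := Complex.continuous_re.comp contQ
  have contf : Continuous f := by
    have : f = fun t => t * P t := funext hfP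
    rw [this]
    exact continuous_id.mul contP
  -- f nonzero on (0, ln)
  have hfne : ∀ t ∈ Ioo (0:ℝ) ln, f t ≠ 0 := by
    intro t ht hzero
    have h := hf t
    rw [hzero] at h
    have hprod : (t:ℂ) * ∏ i, ((t:ℂ) - lam i) ≠ 0 := by
      apply mul_ne_zero
      · exact_mod_cast ne_of_gt ht.1
      · rw [Finset.prod_ne_zero_iff]
        intro i _
        rw [sub_ne_zero]
        intro heq
        by_cases hi : i = ⟨n - 1, by omega⟩
        · rw [hi, hlam] at heq
          have ht2 : t = ln := by exact_mod_cast heq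
          rw [ht2] at ht
          exact lt_irrefl _ ht.2
        · exact hother i hi t heq.symm ⟨ht.1, lt_trans ht.2 hln1⟩
    exact hprod (by rw [← h]; simp)
  -- P 0 = -c
  have hP0 : P 0 = -c := by
    have hsq : ((-1:ℂ)^(n-1)) * ((-1:ℂ)^(n-1)) = 1 := by
      rw [← pow_add, ← two_mul, pow_mul]
      simp
    have hprodlam : ∏ i, lam i = (-1:ℂ)^(n-1) * (c:ℂ) := by
      rw [hc, ← mul_assoc, hsq, one_mul]
    have hsign : (-1:ℂ)^n * (-1:ℂ)^(n-1) = -1 := by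
      rw [← pow_add]
      have : n + (n - 1) = 2 * (n - 1) + 1 := by omega
      rw [this, pow_succ, pow_mul]
      simp
    have hprod0 : ∏ i, (((0:ℝ):ℂ) - lam i) = -(c:ℂ) := by
      have h1 : ∏ i, (((0:ℝ):ℂ) - lam i) = ∏ i, (-1 * lam i) := by
        apply Finset.prod_congr rfl
        intro i _
        push_cast
        ring
      rw [h1, Finset.prod_mul_distrib, Finset.prod_const, Finset.card_univ, Fintype.card_fin,
        hprodlam, ← mul_assoc, hsign]
      ring
    rw [hPdef]
    simp only [hprod0]
    simp
  -- P is negative on (0, ln)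
  have hPneg : ∀ t ∈ Ioo (0:ℝ) ln, P t < 0 := by
    intro t ht
    by_contra hge
    push_neg at hge
    have hPne : P t ≠ 0 := by
      intro h0
      exact hfne t ht (by rw [hfP t, h0, mul_zero])
    have hPpos : 0 < P t := lt_of_le_of_ne hge (Ne.symm hPne)
    have hIVT := intermediate_value_Ioo (le_of_lt ht.1) contP.continuousOn
    have h0mem : (0:ℝ) ∈ Ioo (P 0) (P t) := by
      rw [hP0]
      exact ⟨by linarith, hPpos⟩
    obtain ⟨s, hs, hPs⟩ := hIVT h0mem
    have hsIoo : s ∈ Ioo (0:ℝ) ln := ⟨hs.1, lt_trans hs.2 ht.2⟩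
    exact hfne s hsIoo (by rw [hfP s, hPs, mul_zero])
  -- positivity of -f on (0, ln)
  have hg0 : ∀ t ∈ Ioo (0:ℝ) ln, 0 < -f t := by
    intro t ht
    rw [hfP t]
    nlinarith [hPneg t ht, ht.1]
  -- uniform bound m < 1
  obtain ⟨t₀, ht₀, hmax⟩ := isCompact_Icc.exists_isMaxOn (nonempty_Icc.mpr hln0.le)
    (contf.abs.continuousOn (s := Icc 0 ln))
  set m : ℝ := |f t₀| with hmdef
  have hm0 : 0 ≤ m := abs_nonneg _
  have hm1 : m < 1 := hbound t₀ ht₀.1 (lt_of_le_of_lt ht₀.2 hln1)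
  have hmub : ∀ t ∈ Icc (0:ℝ) ln, |f t| ≤ m := fun t ht => hmax ht
  -- bound M for P
  obtain ⟨M, hMb⟩ := isCompact_Icc.exists_bound_of_continuousOn
    (contP.continuousOn (s := Icc 0 ln))
  set M1 : ℝ := max M 0 with hM1def
  have hM10 : 0 ≤ M1 := le_max_right _ _
  have hgM : ∀ t ∈ Ioo (0:ℝ) ln, -f t ≤ M1 * t := by
    intro t ht
    have h1 : ‖P t‖ ≤ M := hMb t ⟨ht.1.le, ht.2.le⟩
    rw [Real.norm_eq_abs] at h1
    have h2 : -P t ≤ M1 := le_trans (neg_le_abs _) (le_trans h1 (le_max_left _ _))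
    rw [hfP t]
    nlinarith [ht.1]
  have hgm : ∀ t ∈ Ioo (0:ℝ) ln, -f t ≤ m := by
    intro t ht
    exact le_trans (neg_le_abs _) (hmub t ⟨ht.1.le, ht.2.le⟩)
  -- x₀
  set x₀ : ℝ := m ^ ((1:ℝ)/(N:ℝ)) with hx₀def
  have hNinv : 0 < (1:ℝ)/(N:ℝ) := by positivity
  have hx₀0 : 0 ≤ x₀ := Real.rpow_nonneg hm0 _
  have hx₀1 : x₀ < 1 := Real.rpow_lt_one hm0 hm1 hNinv
  have hxnn : ∀ t ∈ Ioo (0:ℝ) ln, 0 ≤ (-f t) ^ ((1:ℝ)/(N:ℝ)) :=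
    fun t ht => Real.rpow_nonneg (hg0 t ht).le _
  have hxx₀ : ∀ t ∈ Ioo (0:ℝ) ln, (-f t) ^ ((1:ℝ)/(N:ℝ)) ≤ x₀ :=
    fun t ht => Real.rpow_le_rpow (hg0 t ht).le (hgm t ht) hNinv.le
  have hxM : ∀ t ∈ Ioo (0:ℝ) ln,
      (-f t) ^ ((1:ℝ)/(N:ℝ)) ≤ M1 ^ ((1:ℝ)/(N:ℝ)) * t ^ ((1:ℝ)/(N:ℝ)) := by
    intro t ht
    rw [← Real.mul_rpow hM10 ht.1.le]
    exact Real.rpow_le_rpow (hg0 t ht).le (hgM t ht) hNinv.le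
  -- rpow power identity
  have hxpow : ∀ t ∈ Ioo (0:ℝ) ln, ∀ k : ℕ,
      ((-f t) ^ ((1:ℝ)/(N:ℝ))) ^ (k+1) = (-f t) ^ (((k:ℝ)+1)/(N:ℝ)) := by
    intro t ht k
    rw [← Real.rpow_natCast ((-f t) ^ ((1:ℝ)/(N:ℝ))) (k+1), ← Real.rpow_mul (hg0 t ht).le]
    congr 1
    push_cast
    ring
  -- the reference dominating function
  have hDint : IntegrableOn (fun t : ℝ => t ^ ((1:ℝ)/(N:ℝ) - 1)) (Ioo 0 ln) := by
    have h := intervalIntegral.intervalIntegrable_rpow' (a := 0) (b := ln)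
      (r := (1:ℝ)/(N:ℝ) - 1) (by linarith)
    rwa [intervalIntegrable_iff_integrableOn_Ioo_of_le hln0.le] at h
  -- abbreviations
  set J : ℝ := ∫ t in Ioo (0:ℝ) ln, t ^ ((1:ℝ)/(N:ℝ) - 1) with hJdef
  set CM : ℝ := M1 ^ ((1:ℝ)/(N:ℝ)) with hCMdef
  have hCM0 : 0 ≤ CM := Real.rpow_nonneg hM10 _
  set hker : ℕ → ℝ → ℝ := fun k t => (-f t) ^ (((k:ℝ)+1)/(N:ℝ)) / t with hkerdef
  have hkernn : ∀ k : ℕ, ∀ t ∈ Ioo (0:ℝ) ln, 0 ≤ hker k t := fun k t ht =>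
    div_nonneg (Real.rpow_nonneg (hg0 t ht).le _) ht.1.le
  have hkerbound : ∀ k : ℕ, ∀ t ∈ Ioo (0:ℝ) ln,
      hker k t ≤ x₀ ^ k * CM * t ^ ((1:ℝ)/(N:ℝ) - 1) := by
    intro k t ht
    have hnum : (-f t) ^ (((k:ℝ)+1)/(N:ℝ)) ≤ x₀ ^ k * (CM * t ^ ((1:ℝ)/(N:ℝ))) := by
      rw [← hxpow t ht k, pow_succ]
      exact mul_le_mul (pow_le_pow_left₀ (hxnn t ht) (hxx₀ t ht) k) (hxM t ht)
        (hxnn t ht) (by positivity)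
    calc hker k t ≤ (x₀ ^ k * (CM * t ^ ((1:ℝ)/(N:ℝ)))) / t :=
          (div_le_div_iff_of_pos_right ht.1).mpr hnum
      _ = x₀ ^ k * CM * t ^ ((1:ℝ)/(N:ℝ) - 1) := by
          rw [Real.rpow_sub ht.1, Real.rpow_one]
          ring
  have hkercont : ∀ k : ℕ, ContinuousOn (hker k) (Ioo (0:ℝ) ln) := by
    intro k
    apply ContinuousOn.div
    · exact (contf.neg.continuousOn).rpow_const (fun t ht => Or.inl (hg0 t ht).ne')
    · exact continuousOn_id
    · exact fun t ht => ht.1.ne'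
  have hkerint : ∀ k : ℕ, IntegrableOn (hker k) (Ioo (0:ℝ) ln) := by
    intro k
    refine Integrable.mono' (hDint.const_mul (x₀ ^ k * CM))
      ((hkercont k).aestronglyMeasurable measurableSet_Ioo) ?_
    rw [ae_restrict_iff' measurableSet_Ioo]
    filter_upwards with t ht
    rw [Real.norm_eq_abs, abs_of_nonneg (hkernn k t ht)]
    exact hkerbound k t ht
  have hJk : ∀ k : ℕ, 0 ≤ ∫ t in Ioo (0:ℝ) ln, hker k t :=
    fun k => setIntegral_nonneg measurableSet_Ioo (hkernn k)
  have hkerIb : ∀ k : ℕ, (∫ t in Ioo (0:ℝ) ln, hker k t) ≤ x₀ ^ k * (CM * J) := by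
    intro k
    have h1 : (∫ t in Ioo (0:ℝ) ln, hker k t)
        ≤ ∫ t in Ioo (0:ℝ) ln, (x₀ ^ k * CM) * t ^ ((1:ℝ)/(N:ℝ) - 1) := by
      apply setIntegral_mono_on (hkerint k) (hDint.const_mul _) measurableSet_Ioo
      intro t ht
      exact hkerbound k t ht
    rw [MeasureTheory.integral_const_mul] at h1
    calc (∫ t in Ioo (0:ℝ) ln, hker k t) ≤ (x₀ ^ k * CM) * J := h1
      _ = x₀ ^ k * (CM * J) := mul_assoc _ _ _
  -- the coefficients
  set Fc : ℕ → ℝ := fun k => -(Real.sin (((k:ℝ)+1)*θ)) / ((k:ℝ)+1) with hFcdef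
  have hFc1 : ∀ k : ℕ, |Fc k| ≤ 1 := by
    intro k
    have h1 : (0:ℝ) < (k:ℝ)+1 := by positivity
    rw [hFcdef]
    simp only [abs_div, abs_neg]
    rw [abs_of_pos h1, div_le_one h1]
    refine le_trans (abs_sin_le_one _) ?_
    have : (0:ℝ) ≤ (k:ℝ) := Nat.cast_nonneg k
    linarith
  have hFint : ∀ k : ℕ, Integrable (fun t => Fc k * hker k t)
      (volume.restrict (Ioo (0:ℝ) ln)) := fun k => (hkerint k).const_mul _
  have hFnormb : ∀ k : ℕ, (∫ t in Ioo (0:ℝ) ln, ‖Fc k * hker k t‖) ≤ x₀ ^ k * (CM * J) := by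
    intro k
    have h1 : (∫ t in Ioo (0:ℝ) ln, ‖Fc k * hker k t‖) ≤ ∫ t in Ioo (0:ℝ) ln, hker k t := by
      apply setIntegral_mono_on (hFint k).norm (hkerint k) measurableSet_Ioo
      intro t ht
      rw [norm_mul, Real.norm_eq_abs, Real.norm_eq_abs, abs_of_nonneg (hkernn k t ht)]
      calc |Fc k| * hker k t ≤ 1 * hker k t :=
            mul_le_mul_of_nonneg_right (hFc1 k) (hkernn k t ht)
        _ = hker k t := one_mul _
    exact le_trans h1 (hkerIb k)
  have hgeosum : Summable (fun k : ℕ => x₀ ^ k * (CM * J)) :=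
    (summable_geometric_of_lt_one hx₀0 hx₀1).mul_right _
  have hFnormsum : Summable (fun k : ℕ => ∫ t in Ioo (0:ℝ) ln, ‖Fc k * hker k t‖) :=
    Summable.of_nonneg_of_le (fun k => integral_nonneg (fun t => norm_nonneg _))
      hFnormb hgeosum
  -- pointwise expansion
  have hHS : ∀ t ∈ Ioo (0:ℝ) ln,
      HasSum (fun k : ℕ => Fc k * hker k t)
        (Complex.arg (1 - Complex.exp ((Real.pi:ℂ) * Complex.I / (N:ℂ)) *
          (((-f t) ^ ((1:ℝ)/(N:ℝ)) : ℝ) : ℂ)) / t) := by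
    intro t ht
    rw [hEθ]
    have h1 := (argSeries θ ((-f t) ^ ((1:ℝ)/(N:ℝ))) (hxnn t ht)
      (lt_of_le_of_lt (hxx₀ t ht) hx₀1)).div_const t
    have hfun : (fun k : ℕ =>
        -(Real.sin (((k:ℝ)+1)*θ) * ((-f t) ^ ((1:ℝ)/(N:ℝ)))^(k+1) / ((k:ℝ)+1)) / t)
        = fun k : ℕ => Fc k * hker k t := by
      funext k
      rw [hxpow t ht k, hFcdef, hkerdef]
      ring
    rw [← hfun]
    exact h1
  -- integrability of the arg-integrand
  have hAcont : ContinuousOn (fun t : ℝ =>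
      Complex.arg (1 - Complex.exp ((Real.pi:ℂ) * Complex.I / (N:ℂ)) *
        (((-f t) ^ ((1:ℝ)/(N:ℝ)) : ℝ) : ℂ)) / t) (Ioo (0:ℝ) ln) := by
    intro t ht
    apply ContinuousWithinAt.div _ continuousWithinAt_id ht.1.ne'
    have hw : ContinuousWithinAt (fun s : ℝ =>
        (1:ℂ) - Complex.exp ((Real.pi:ℂ) * Complex.I / (N:ℂ)) *
          (((-f s) ^ ((1:ℝ)/(N:ℝ)) : ℝ) : ℂ)) (Ioo (0:ℝ) ln) t := by
      apply ContinuousWithinAt.sub continuousWithinAt_const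
      apply ContinuousWithinAt.mul continuousWithinAt_const
      exact Complex.continuous_ofReal.continuousAt.comp_continuousWithinAt
        (((contf.neg.continuousOn).rpow_const (fun s hs => Or.inl (hg0 s hs).ne')) t ht)
    refine (Complex.continuousAt_arg ?_).comp_continuousWithinAt hw
    have hre : ((1:ℂ) - Complex.exp ((Real.pi:ℂ) * Complex.I / (N:ℂ)) *
        (((-f t) ^ ((1:ℝ)/(N:ℝ)) : ℝ) : ℂ)).re
        = 1 - (Complex.exp ((Real.pi:ℂ) * Complex.I / (N:ℂ))).re *
            ((-f t) ^ ((1:ℝ)/(N:ℝ))) := by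
      simp [Complex.sub_re, Complex.mul_re]
    have hEre : |(Complex.exp ((Real.pi:ℂ) * Complex.I / (N:ℂ))).re| ≤ 1 := by
      rw [hEθ]
      have h2 := Complex.abs_re_le_norm (Complex.exp ((θ:ℂ) * Complex.I))
      rwa [Complex.norm_exp_ofReal_mul_I] at h2
    rw [Complex.mem_slitPlane_iff]
    left
    rw [hre]
    have hx1 : (-f t) ^ ((1:ℝ)/(N:ℝ)) < 1 := lt_of_le_of_lt (hxx₀ t ht) hx₀1
    have hxnn' := hxnn t ht
    have hEre' := abs_le.mp hEre
    nlinarith [mul_le_mul_of_nonneg_right hEre'.2 hxnn']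
  have hAint : IntegrableOn (fun t : ℝ =>
      Complex.arg (1 - Complex.exp ((Real.pi:ℂ) * Complex.I / (N:ℂ)) *
        (((-f t) ^ ((1:ℝ)/(N:ℝ)) : ℝ) : ℂ)) / t) (Ioo (0:ℝ) ln) := by
    have h1x₀ : (0:ℝ) < 1 - x₀ := by linarith
    refine Integrable.mono' (hDint.const_mul (CM / (1 - x₀)))
      (hAcont.aestronglyMeasurable measurableSet_Ioo) ?_
    rw [ae_restrict_iff' measurableSet_Ioo]
    filter_upwards with t ht
    rw [Real.norm_eq_abs, abs_div, abs_of_pos ht.1]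
    have hb := argBound θ ((-f t) ^ ((1:ℝ)/(N:ℝ))) x₀ (hxnn t ht) (hxx₀ t ht) hx₀1
    rw [← hEθ] at hb
    calc |Complex.arg (1 - Complex.exp ((Real.pi:ℂ) * Complex.I / (N:ℂ)) *
          (((-f t) ^ ((1:ℝ)/(N:ℝ)) : ℝ) : ℂ))| / t
        ≤ ((-f t) ^ ((1:ℝ)/(N:ℝ)) / (1 - x₀)) / t := (div_le_div_iff_of_pos_right ht.1).mpr hb
      _ ≤ ((CM * t ^ ((1:ℝ)/(N:ℝ))) / (1 - x₀)) / t := by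
          apply (div_le_div_iff_of_pos_right ht.1).mpr
          apply (div_le_div_iff_of_pos_right h1x₀).mpr
          exact hxM t ht
      _ = (CM / (1 - x₀)) * t ^ ((1:ℝ)/(N:ℝ) - 1) := by
          rw [Real.rpow_sub ht.1, Real.rpow_one]
          field_simp
  refine ⟨hAint, ?_, ?_⟩
  · -- summability of the absolute values
    apply Summable.of_nonneg_of_le (fun k => abs_nonneg _) ?_ hgeosum
    intro k
    have h1 : |(1/((k:ℝ)+1)) * Real.sin (Real.pi * ((k:ℝ)+1) / (N:ℝ)) *
        (∫ t in Ioo (0:ℝ) ln, hker k t)| ≤ ∫ t in Ioo (0:ℝ) ln, hker k t := by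
      rw [abs_mul, abs_of_nonneg (hJk k)]
      have h2 : |1/((k:ℝ)+1) * Real.sin (Real.pi * ((k:ℝ)+1) / (N:ℝ))| ≤ 1 := by
        rw [abs_mul]
        have h3 : (0:ℝ) < (k:ℝ)+1 := by positivity
        have h4 : |1/((k:ℝ)+1)| ≤ 1 := by
          rw [abs_of_pos (by positivity), div_le_one h3]
          have : (0:ℝ) ≤ (k:ℝ) := Nat.cast_nonneg k
          linarith
        have h5 := abs_sin_le_one (Real.pi * ((k:ℝ)+1) / (N:ℝ))
        nlinarith [abs_nonneg (1/((k:ℝ)+1)), abs_nonneg (Real.sin (Real.pi * ((k:ℝ)+1) / (N:ℝ)))]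
      nlinarith [hJk k, abs_nonneg ((1:ℝ)/((k:ℝ)+1) * Real.sin (Real.pi * ((k:ℝ)+1) / (N:ℝ)))]
    exact le_trans h1 (hkerIb k)
  · -- the integral identity
    have hswap := MeasureTheory.integral_tsum_of_summable_integral_norm
      (μ := volume.restrict (Ioo (0:ℝ) ln))
      (F := fun k : ℕ => fun t : ℝ => Fc k * hker k t) hFint hFnormsum
    have hcongr : (∫ t in Ioo (0:ℝ) ln,
        Complex.arg (1 - Complex.exp ((Real.pi:ℂ) * Complex.I / (N:ℂ)) *
          (((-f t) ^ ((1:ℝ)/(N:ℝ)) : ℝ) : ℂ)) / t)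
        = ∫ t in Ioo (0:ℝ) ln, ∑' k : ℕ, Fc k * hker k t :=
      setIntegral_congr_fun measurableSet_Ioo (fun t ht => ((hHS t ht).tsum_eq).symm)
    have hterm2 : ∀ k : ℕ, (∫ t in Ioo (0:ℝ) ln, Fc k * hker k t)
        = -((1/((k:ℝ)+1)) * Real.sin (Real.pi * ((k:ℝ)+1) / (N:ℝ)) *
            ∫ t in Ioo (0:ℝ) ln, hker k t) := by
      intro k
      rw [MeasureTheory.integral_const_mul]
      have hFck : Fc k = -((1/((k:ℝ)+1)) * Real.sin (Real.pi * ((k:ℝ)+1) / (N:ℝ))) := by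
        rw [hFcdef]
        have harg : ((k:ℝ)+1)*θ = Real.pi * ((k:ℝ)+1) / (N:ℝ) := by
          rw [hθdef]; ring
        simp only [harg]
        ring
      rw [hFck]
      ring
    rw [hcongr, ← hswap]
    rw [tsum_congr hterm2, tsum_neg]
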